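/- Let L be a finite meet-semilattice, let S = {y₁,…,y_n} ⊆ L be a meet-closed subset listed in a linear extension order (i.e., y_i ≤ y_j implies i ≤ j), let R be a commutative ring, and let f : L → R. Define F : S → R by F(y) = ∑_{x ∈ L, x ≤ y} f(x), and define f̂ : S → R by f̂(y_i) = ∑_{x ⊴ y_i} f(x), where x ⊴ y_i means x ≤ y_i and x ≰ y_j for all j < i. Then for every i, F(y_i) = ∑_{y_k ≤ y_i, y_k ∈ S} f̂(y_k). -/

import Mathlib

/-- let `L` be a finite meet-semilattice, `S = {y₁,…,y_n} ⊆ L` meet-closed and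
listed in a linear extension order, `f : L → R`.  With `F(yᵢ) = ∑_{x ≤ yᵢ, x ∈ L} f(x)` and
`f̂(yᵢ) = ∑_{x ⊴ yᵢ} f(x)` (where `x ⊴ yᵢ` means `x ≤ yᵢ` and `x ≰ y_j` for all `j < i`),
one has `F(yᵢ) = ∑_{y_k ≤ yᵢ, y_k ∈ S} f̂(y_k)` for every `i`. -/
theorem hat_lemma {L R : Type*} [Fintype L] [SemilatticeInf L] [DecidableEq L]
    [DecidableRel ((· ≤ ·) : L → L → Prop)] [CommRing R]
    {n : ℕ} (y : Fin n → L) (hinj : Function.Injective y)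
    (hmeet : ∀ i j : Fin n, ∃ l : Fin n, y i ⊓ y j = y l)
    (hlin : ∀ i j : Fin n, y i ≤ y j → i ≤ j)
    (f : L → R) (i : Fin n) :
    ∑ x ∈ Finset.univ.filter (fun x : L => x ≤ y i), f x =
      ∑ l ∈ Finset.univ.filter (fun l : Fin n => y l ≤ y i),
        ∑ x ∈ Finset.univ.filter
          (fun x : L => x ≤ y l ∧ ∀ j : Fin n, j < l → ¬ x ≤ y j), f x := by
  classical
  have hset : Finset.univ.filter (fun x : L => x ≤ y i) =
      (Finset.univ.filter (fun l : Fin n => y l ≤ y i)).biUnion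
        (fun l => Finset.univ.filter
          (fun x : L => x ≤ y l ∧ ∀ j : Fin n, j < l → ¬ x ≤ y j)) := by
    ext x
    simp only [Finset.mem_biUnion, Finset.mem_filter, Finset.mem_univ, true_and]
    constructor
    · intro hx
      -- take the minimal index l with x ≤ y l
      set T : Finset (Fin n) := Finset.univ.filter (fun l => x ≤ y l) with hT
      have hTne : T.Nonempty := ⟨i, by simp [hT, hx]⟩
      set l := T.min' hTne with hl
      have hxl : x ≤ y l := by
        have := T.min'_mem hTne
        simpa [hT] using this
      have hmin : ∀ j : Fin n, j < l → ¬ x ≤ y j := by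
        intro j hj hxj
        have : l ≤ j := T.min'_le j (by simp [hT, hxj])
        exact absurd hj (not_lt.mpr this)
      -- use meet-closedness to show y l ≤ y i
      obtain ⟨m, hm⟩ := hmeet l i
      have hxm : x ≤ y m := hm ▸ le_inf hxl hx
      have hml : m ≤ l := hlin m l (hm ▸ inf_le_left)
      have hlm : l ≤ m := T.min'_le m (by simp [hT, hxm])
      have : m = l := le_antisymm hml hlm
      refine ⟨l, ?_, hxl, hmin⟩
      calc y l = y l ⊓ y i := by rw [hm, this]
        _ ≤ y i := inf_le_right
    · rintro ⟨l, hli, hxl, -⟩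
      exact hxl.trans hli
  rw [hset]
  have hdisj : ((Finset.univ.filter (fun l : Fin n => y l ≤ y i)) :
      Set (Fin n)).PairwiseDisjoint (fun l => Finset.univ.filter
        (fun x : L => x ≤ y l ∧ ∀ j : Fin n, j < l → ¬ x ≤ y j)) := by
    intro a _ b _ hab
    simp only [Finset.disjoint_left, Finset.mem_filter, Finset.mem_univ, true_and]
    rintro x ⟨hxa, hma⟩ ⟨hxb, hmb⟩
    rcases lt_or_gt_of_ne hab with h | h
    · exact hmb a h hxa
    · exact hma b h hxb
  exact Finset.sum_biUnion hdisj
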